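/- If there are constants 0 < c_l ≤ c_u such that c_l|x|² ≤ xᵀ D x ≤ c_u|x|² for all x ∈ ℝⁿ, then the same bounds hold for the Schur complement matrix: c_l|y|² ≤ yᵀ (Bᵀ A D B) y ≤ c_u|y|² for all y ∈ ℝᵐ. -/

import Mathlib

open Matrix

private lemma quad_key {n m : ℕ} (P : Matrix (Fin n) (Fin m) ℝ)
    (M : Matrix (Fin n) (Fin n) ℝ) (x : Fin m → ℝ) :
    x ⬝ᵥ ((Pᵀ * M * P) *ᵥ x) = (P *ᵥ x) ⬝ᵥ (M *ᵥ (P *ᵥ x)) := by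
  rw [← mulVec_mulVec, ← mulVec_mulVec, dotProduct_mulVec, vecMul_transpose]

private lemma quad_key2 {n m : ℕ} (P : Matrix (Fin n) (Fin m) ℝ) (x : Fin m → ℝ) :
    (P *ᵥ x) ⬝ᵥ (P *ᵥ x) = x ⬝ᵥ ((Pᵀ * P) *ᵥ x) := by
  have h := quad_key P 1 x
  simpa using h.symm

private lemma dot_self_nonneg {m : ℕ} (x : Fin m → ℝ) : 0 ≤ x ⬝ᵥ x :=
  Finset.sum_nonneg fun i _ => mul_self_nonneg _

/-- If `c_l |x|² ≤ xᵀ D x ≤ c_u |x|²` for all `x ∈ ℝⁿ`, then the same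
bounds hold for the Schur complement matrix:
`c_l |y|² ≤ yᵀ (Bᵀ A D B) y ≤ c_u |y|²` for all `y ∈ ℝᵐ`. -/
theorem stmt_5 {l m : ℕ} (hl : 1 ≤ l) (hm : 1 ≤ m)
    (Bc : Matrix (Fin (l + m)) (Fin l) ℝ) (B : Matrix (Fin (l + m)) (Fin m) ℝ)
    (D : Matrix (Fin (l + m)) (Fin (l + m)) ℝ)
    (hBc : Bcᵀ * Bc = 1) (hB : Bᵀ * B = 1) (hBcB : Bcᵀ * B = 0)
    (hsum : Bc * Bcᵀ + B * Bᵀ = 1)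
    (hD : D.PosDef)
    (A : Matrix (Fin (l + m)) (Fin (l + m)) ℝ)
    (hA : A = 1 - D * Bc * (Bcᵀ * D * Bc)⁻¹ * Bcᵀ)
    (c_l c_u : ℝ) (hcl : 0 < c_l) (hclu : c_l ≤ c_u)
    (hDbound : ∀ x : Fin (l + m) → ℝ,
      c_l * (x ⬝ᵥ x) ≤ x ⬝ᵥ (D *ᵥ x) ∧ x ⬝ᵥ (D *ᵥ x) ≤ c_u * (x ⬝ᵥ x)) :
    ∀ y : Fin m → ℝ,
      c_l * (y ⬝ᵥ y) ≤ y ⬝ᵥ ((Bᵀ * A * D * B) *ᵥ y) ∧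
      y ⬝ᵥ ((Bᵀ * A * D * B) *ᵥ y) ≤ c_u * (y ⬝ᵥ y) := by
  have hDsymm : Dᵀ = D := by
    have := hD.isHermitian
    rwa [Matrix.IsHermitian, conjTranspose_eq_transpose_of_trivial] at this
  set D11 : Matrix (Fin l) (Fin l) ℝ := Bcᵀ * D * Bc with hD11def
  have hD11 : D11.PosDef := by
    refine Matrix.PosDef.of_dotProduct_mulVec_pos ?_ (fun u hu => ?_)
    · rw [Matrix.IsHermitian, conjTranspose_eq_transpose_of_trivial, hD11def,
        transpose_mul, transpose_mul, transpose_transpose, hDsymm, Matrix.mul_assoc]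
    · have hBcu : Bc *ᵥ u ≠ 0 := by
        intro h
        apply hu
        have h2 : Bcᵀ *ᵥ (Bc *ᵥ u) = u := by rw [mulVec_mulVec, hBc, one_mulVec]
        rw [h, mulVec_zero] at h2
        exact h2.symm
      have := hD.dotProduct_mulVec_pos hBcu
      rw [star_trivial, hD11def, quad_key Bc D u]
      simpa only [star_trivial] using this
  set K : Matrix (Fin l) (Fin l) ℝ := D11⁻¹ with hKdef
  have hK : K.PosDef := hD11.inv
  have hdet : IsUnit D11.det := isUnit_iff_ne_zero.mpr hD11.det_pos.ne'
  have hKD : K * D11 = 1 := nonsing_inv_mul _ hdet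
  have hKsymm : Kᵀ = K := by
    rw [hKdef, transpose_nonsing_inv]
    congr 1
    have := hD11.isHermitian
    rwa [Matrix.IsHermitian, conjTranspose_eq_transpose_of_trivial] at this
  set E : Matrix (Fin l) (Fin m) ℝ := Bcᵀ * D * B with hEdef
  have hEt : Eᵀ = Bᵀ * D * Bc := by
    rw [hEdef, transpose_mul, transpose_mul, transpose_transpose, hDsymm, Matrix.mul_assoc]
  set C : Matrix (Fin l) (Fin m) ℝ := -(K * E) with hCdef
  have hCt : Cᵀ = -(Eᵀ * K) := by
    rw [hCdef, transpose_neg, transpose_mul, hKsymm]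
  set P : Matrix (Fin (l + m)) (Fin m) ℝ := Bc * C + B with hPdef
  -- expansion of Pᵀ * D * P
  have hexp : Pᵀ * D * P =
      Cᵀ * D11 * C + Cᵀ * E + Eᵀ * C + Bᵀ * D * B := by
    rw [hPdef, transpose_add, transpose_mul, hEt, hEdef, hD11def]
    simp only [Matrix.add_mul, Matrix.mul_add]
    simp only [Matrix.mul_assoc]
    abel
  have hC1 : Cᵀ * D11 * C = Eᵀ * (K * E) := by
    rw [hCt, hCdef]
    simp only [Matrix.neg_mul, Matrix.mul_neg, neg_neg, Matrix.mul_assoc]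
    rw [← Matrix.mul_assoc K D11, hKD, Matrix.one_mul]
  have hC2 : Cᵀ * E = -(Eᵀ * (K * E)) := by
    rw [hCt]
    simp only [Matrix.neg_mul, Matrix.mul_assoc]
  have hSchur : Bᵀ * A * D * B = Bᵀ * D * B - Eᵀ * (K * E) := by
    rw [hA]
    simp only [Matrix.sub_mul, Matrix.mul_sub, Matrix.mul_one, Matrix.one_mul]
    congr 1
    rw [hEt, hEdef]
    simp only [Matrix.mul_assoc]
  have hP : Pᵀ * D * P = Bᵀ * A * D * B := by
    rw [hexp, hC1, hC2, hSchur, hCdef, Matrix.mul_neg]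
    abel
  have hPP : Pᵀ * P = Cᵀ * C + 1 := by
    have hBtBc : Bᵀ * Bc = 0 := by
      have := congrArg Matrix.transpose hBcB
      rwa [transpose_mul, transpose_transpose, transpose_zero] at this
    rw [hPdef, transpose_add, transpose_mul]
    simp only [Matrix.add_mul, Matrix.mul_add]
    rw [Matrix.mul_assoc Cᵀ Bcᵀ (Bc * C), ← Matrix.mul_assoc Bcᵀ Bc C, hBc, Matrix.one_mul,
      Matrix.mul_assoc Cᵀ Bcᵀ B, hBcB, Matrix.mul_zero, ← Matrix.mul_assoc Bᵀ Bc C, hBtBc,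
      Matrix.zero_mul, hB]
    abel
  intro y
  -- the quadratic form equals the D-quadratic form at x = P y
  have hq : y ⬝ᵥ ((Bᵀ * A * D * B) *ᵥ y) = (P *ᵥ y) ⬝ᵥ (D *ᵥ (P *ᵥ y)) := by
    rw [← hP, quad_key]
  have hnorm : (P *ᵥ y) ⬝ᵥ (P *ᵥ y) = (C *ᵥ y) ⬝ᵥ (C *ᵥ y) + y ⬝ᵥ y := by
    rw [quad_key2, hPP, add_mulVec, dotProduct_add, one_mulVec, quad_key2]
  constructor
  · -- lower bound
    have h1 : y ⬝ᵥ y ≤ (P *ᵥ y) ⬝ᵥ (P *ᵥ y) := by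
      rw [hnorm]
      have := dot_self_nonneg (C *ᵥ y)
      linarith
    have h2 := (hDbound (P *ᵥ y)).1
    rw [hq]
    calc c_l * (y ⬝ᵥ y) ≤ c_l * ((P *ᵥ y) ⬝ᵥ (P *ᵥ y)) := by
          exact mul_le_mul_of_nonneg_left h1 hcl.le
      _ ≤ (P *ᵥ y) ⬝ᵥ (D *ᵥ (P *ᵥ y)) := h2
  · -- upper bound
    have hK0 : 0 ≤ (E *ᵥ y) ⬝ᵥ (K *ᵥ (E *ᵥ y)) := by
      have := hK.posSemidef.dotProduct_mulVec_nonneg (E *ᵥ y)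
      simpa using this
    have hsplit : y ⬝ᵥ ((Bᵀ * A * D * B) *ᵥ y) =
        y ⬝ᵥ ((Bᵀ * D * B) *ᵥ y) - (E *ᵥ y) ⬝ᵥ (K *ᵥ (E *ᵥ y)) := by
      rw [hSchur, sub_mulVec, dotProduct_sub]
      congr 1
      have : Eᵀ * (K * E) = Eᵀ * K * E := by rw [Matrix.mul_assoc]
      rw [this, quad_key E K y]
    have hBy : y ⬝ᵥ ((Bᵀ * D * B) *ᵥ y) ≤ c_u * (y ⬝ᵥ y) := by
      rw [quad_key B D y]
      have h2 := (hDbound (B *ᵥ y)).2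
      have h3 : (B *ᵥ y) ⬝ᵥ (B *ᵥ y) = y ⬝ᵥ y := by
        rw [quad_key2, hB, one_mulVec]
      rw [h3] at h2
      exact h2
    rw [hsplit]
    linarith
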